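/- arXiv:2007.12811 — 4 statements merged into one kernel-verified Lean document; each statement's English description precedes it below -/
import Mathlib

section
/- Let $f_n \in L^2(\mathbb{R}_+^n)$ and $g_m \in L^2(\mathbb{R}_+^m)$ be symmetric square-integrable functions, and let $0 \le k \le \min(n,m)$. Then $\|f_n\star_k^k g_m\|_{L^2(\mathbb{R}_+^{m+n-2k})}^2 \le 2^{2n-4k-1}\|f_n\star_{n-k}^{n-k} f_n\|_{L^2(\mathbb{R}_+^{2k})}^2 + 2^{2m-4k-1}\|g_m\star_{m-k}^{m-k} g_m\|_{L^2(\mathbb{R}_+^{2k})}^2$. -/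
open MeasureTheory ENNReal

/-- Lebesgue measure on the positive orthant of `ℝ^a`. -/
noncomputable def posMeasure (a : ℕ) : Measure (Fin a → ℝ) :=
  (volume : Measure (Fin a → ℝ)).restrict {x | ∀ i, 0 < x i}


namespace ContractionAux

variable {A C D : Type*} [MeasurableSpace A] [MeasurableSpace C] [MeasurableSpace D]

lemma rpow_half_sq (x : ℝ≥0∞) : (x ^ (1/2 : ℝ)) ^ (2:ℝ) = x := by
  rw [← ENNReal.rpow_mul]; norm_num

lemma lintegral_CS (μ : Measure A) {φ ψ : A → ℝ≥0∞} (hφ : AEMeasurable φ μ)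
    (hψ : AEMeasurable ψ μ) :
    ∫⁻ x, φ x * ψ x ∂μ ≤
      (∫⁻ x, φ x ^ (2:ℝ) ∂μ) ^ (1/2 : ℝ) * (∫⁻ x, ψ x ^ (2:ℝ) ∂μ) ^ (1/2 : ℝ) :=
  ENNReal.lintegral_mul_le_Lp_mul_Lq μ ⟨by norm_num, by norm_num, by norm_num⟩ hφ hψ

lemma lintegral_pair_lt_top (μ : Measure A) [SigmaFinite μ] {u v : A → ℝ≥0∞}
    (hu : Measurable u) (hv : Measurable v)
    (huf : ∫⁻ w, u w ∂μ ≠ ⊤) (hvf : ∫⁻ w, v w ∂μ ≠ ⊤) :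
    ∫⁻ p : A × A, (u p.1 ^ (1/2:ℝ) * v p.1 ^ (1/2:ℝ)) * (u p.2 ^ (1/2:ℝ) * v p.2 ^ (1/2:ℝ))
      ∂(μ.prod μ) < ⊤ := by
  have hh : Measurable fun w => u w ^ (1/2:ℝ) * v w ^ (1/2:ℝ) :=
    (hu.pow_const _).mul (hv.pow_const _)
  rw [lintegral_prod_mul hh.aemeasurable hh.aemeasurable]
  have hle : ∫⁻ w, u w ^ (1/2:ℝ) * v w ^ (1/2:ℝ) ∂μ ≤
      (∫⁻ w, u w ∂μ) ^ (1/2:ℝ) * (∫⁻ w, v w ∂μ) ^ (1/2:ℝ) := by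
    have h := lintegral_CS μ (hu.pow_const (1/2:ℝ)).aemeasurable
      (hv.pow_const (1/2:ℝ)).aemeasurable
    simp only [rpow_half_sq] at h
    exact h
  have hX : (∫⁻ w, u w ∂μ) ^ (1/2:ℝ) * (∫⁻ w, v w ∂μ) ^ (1/2:ℝ) < ⊤ :=
    ENNReal.mul_lt_top (ENNReal.rpow_lt_top_of_nonneg (by norm_num) huf)
      (ENNReal.rpow_lt_top_of_nonneg (by norm_num) hvf)
  exact lt_of_le_of_lt (mul_le_mul' hle hle) (ENNReal.mul_lt_top hX hX)

lemma integrable_contr (μ : Measure A) [SigmaFinite μ] {F G : A × A → ℝ} {u v : A → ℝ≥0∞}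
    (hF : AEStronglyMeasurable F (μ.prod μ)) (hG : AEStronglyMeasurable G (μ.prod μ))
    (hu : Measurable u) (hv : Measurable v)
    (hub : ∀ p : A × A, (‖F p‖₊ : ℝ≥0∞) ≤ u p.1 ^ (1/2:ℝ) * u p.2 ^ (1/2:ℝ))
    (hvb : ∀ p : A × A, (‖G p‖₊ : ℝ≥0∞) ≤ v p.1 ^ (1/2:ℝ) * v p.2 ^ (1/2:ℝ))
    (huf : ∫⁻ w, u w ∂μ ≠ ⊤) (hvf : ∫⁻ w, v w ∂μ ≠ ⊤) :
    Integrable (fun p => F p * G p) (μ.prod μ) := by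
  refine ⟨hF.mul hG, ?_⟩
  rw [HasFiniteIntegral]
  calc ∫⁻ p, ‖F p * G p‖₊ ∂(μ.prod μ)
      ≤ ∫⁻ p : A × A, (u p.1 ^ (1/2:ℝ) * v p.1 ^ (1/2:ℝ)) * (u p.2 ^ (1/2:ℝ) * v p.2 ^ (1/2:ℝ))
          ∂(μ.prod μ) := by
        refine lintegral_mono fun p => ?_
        calc ((‖F p * G p‖₊ : ℝ≥0∞)) = (‖F p‖₊ : ℝ≥0∞) * (‖G p‖₊ : ℝ≥0∞) := by
              rw [nnnorm_mul, ENNReal.coe_mul]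
          _ ≤ (u p.1 ^ (1/2:ℝ) * u p.2 ^ (1/2:ℝ)) * (v p.1 ^ (1/2:ℝ) * v p.2 ^ (1/2:ℝ)) :=
              mul_le_mul' (hub p) (hvb p)
          _ = _ := by ring
    _ < ⊤ := lintegral_pair_lt_top μ hu hv huf hvf

lemma main (μ : Measure A) (ν : Measure C) (τ : Measure D)
    [SigmaFinite μ] [SigmaFinite ν] [SigmaFinite τ]
    (f : A → C → ℝ) (g : A → D → ℝ)
    (hfm : Measurable fun q : A × C => f q.1 q.2)
    (hgm : Measurable fun q : A × D => g q.1 q.2)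
    (hf2 : ∫⁻ q, (‖f q.1 q.2‖₊ : ℝ≥0∞) ^ (2:ℝ) ∂(μ.prod ν) ≠ ⊤)
    (hg2 : ∫⁻ q, (‖g q.1 q.2‖₊ : ℝ≥0∞) ^ (2:ℝ) ∂(μ.prod τ) ≠ ⊤) :
    Integrable (fun yz : C × D => (∫ w, f w yz.1 * g w yz.2 ∂μ) ^ 2) (ν.prod τ) ∧
    Integrable (fun p : A × A => (∫ y, f p.1 y * f p.2 y ∂ν) ^ 2) (μ.prod μ) ∧
    Integrable (fun p : A × A => (∫ z, g p.1 z * g p.2 z ∂τ) ^ 2) (μ.prod μ) ∧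
    ∫ yz : C × D, (∫ w, f w yz.1 * g w yz.2 ∂μ) ^ 2 ∂(ν.prod τ) ≤
      2⁻¹ * ∫ p : A × A, (∫ y, f p.1 y * f p.2 y ∂ν) ^ 2 ∂(μ.prod μ)
      + 2⁻¹ * ∫ p : A × A, (∫ z, g p.1 z * g p.2 z ∂τ) ^ 2 ∂(μ.prod μ) := by
  -- the ennreal marginals
  set nf : A → ℝ≥0∞ := fun w => ∫⁻ y, (‖f w y‖₊ : ℝ≥0∞) ^ (2:ℝ) ∂ν with hnf_def
  set ng : A → ℝ≥0∞ := fun w => ∫⁻ z, (‖g w z‖₊ : ℝ≥0∞) ^ (2:ℝ) ∂τ with hng_def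
  have hnf : Measurable nf := (hfm.nnnorm.coe_nnreal_ennreal.pow_const _).lintegral_prod_right'
  have hng : Measurable ng := (hgm.nnnorm.coe_nnreal_ennreal.pow_const _).lintegral_prod_right'
  have hnf_fin : ∫⁻ w, nf w ∂μ ≠ ⊤ := by
    rw [hnf_def, ← lintegral_prod _ (hfm.nnnorm.coe_nnreal_ennreal.pow_const _).aemeasurable]
    exact hf2
  have hng_fin : ∫⁻ w, ng w ∂μ ≠ ⊤ := by
    rw [hng_def, ← lintegral_prod _ (hgm.nnnorm.coe_nnreal_ennreal.pow_const _).aemeasurable]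
    exact hg2
  -- slicewise Cauchy-Schwarz
  have keyf : ∀ w w' : A, ∫⁻ y, (‖f w y‖₊ : ℝ≥0∞) * (‖f w' y‖₊ : ℝ≥0∞) ∂ν ≤
      nf w ^ (1/2:ℝ) * nf w' ^ (1/2:ℝ) := fun w w' =>
    lintegral_CS ν (hfm.comp (measurable_prodMk_left)).nnnorm.coe_nnreal_ennreal.aemeasurable
      (hfm.comp (measurable_prodMk_left)).nnnorm.coe_nnreal_ennreal.aemeasurable
  have keyg : ∀ w w' : A, ∫⁻ z, (‖g w z‖₊ : ℝ≥0∞) * (‖g w' z‖₊ : ℝ≥0∞) ∂τ ≤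
      ng w ^ (1/2:ℝ) * ng w' ^ (1/2:ℝ) := fun w w' =>
    lintegral_CS τ (hgm.comp (measurable_prodMk_left)).nnnorm.coe_nnreal_ennreal.aemeasurable
      (hgm.comp (measurable_prodMk_left)).nnnorm.coe_nnreal_ennreal.aemeasurable

  -- the kernels F and G
  set F : A × A → ℝ := fun p => ∫ y, f p.1 y * f p.2 y ∂ν with hF_def
  set G : A × A → ℝ := fun p => ∫ z, g p.1 z * g p.2 z ∂τ with hG_def
  have hFm : StronglyMeasurable F := by
    have : Measurable fun q : (A × A) × C => f q.1.1 q.2 * f q.1.2 q.2 :=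
      (hfm.comp ((measurable_fst.comp measurable_fst).prodMk measurable_snd)).mul
        (hfm.comp ((measurable_snd.comp measurable_fst).prodMk measurable_snd))
    exact this.stronglyMeasurable.integral_prod_right'
  have hGm : StronglyMeasurable G := by
    have : Measurable fun q : (A × A) × D => g q.1.1 q.2 * g q.1.2 q.2 :=
      (hgm.comp ((measurable_fst.comp measurable_fst).prodMk measurable_snd)).mul
        (hgm.comp ((measurable_snd.comp measurable_fst).prodMk measurable_snd))
    exact this.stronglyMeasurable.integral_prod_right'
  have hFb : ∀ p : A × A, (‖F p‖₊ : ℝ≥0∞) ≤ nf p.1 ^ (1/2:ℝ) * nf p.2 ^ (1/2:ℝ) := by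
    intro p
    calc (‖F p‖₊ : ℝ≥0∞) ≤ ∫⁻ y, ‖f p.1 y * f p.2 y‖₊ ∂ν :=
          enorm_integral_le_lintegral_enorm _
      _ = ∫⁻ y, (‖f p.1 y‖₊ : ℝ≥0∞) * (‖f p.2 y‖₊ : ℝ≥0∞) ∂ν := by
          simp_rw [nnnorm_mul, ENNReal.coe_mul]
      _ ≤ _ := keyf p.1 p.2
  have hGb : ∀ p : A × A, (‖G p‖₊ : ℝ≥0∞) ≤ ng p.1 ^ (1/2:ℝ) * ng p.2 ^ (1/2:ℝ) := by
    intro p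
    calc (‖G p‖₊ : ℝ≥0∞) ≤ ∫⁻ z, ‖g p.1 z * g p.2 z‖₊ ∂τ :=
          enorm_integral_le_lintegral_enorm _
      _ = ∫⁻ z, (‖g p.1 z‖₊ : ℝ≥0∞) * (‖g p.2 z‖₊ : ℝ≥0∞) ∂τ := by
          simp_rw [nnnorm_mul, ENNReal.coe_mul]
      _ ≤ _ := keyg p.1 p.2
  -- integrability of the three quadratic kernels
  have hF2 : Integrable (fun p : A × A => F p * F p) (μ.prod μ) :=
    integrable_contr μ hFm.aestronglyMeasurable hFm.aestronglyMeasurable hnf hnf hFb hFb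
      hnf_fin hnf_fin
  have hG2 : Integrable (fun p : A × A => G p * G p) (μ.prod μ) :=
    integrable_contr μ hGm.aestronglyMeasurable hGm.aestronglyMeasurable hng hng hGb hGb
      hng_fin hng_fin
  have hFG : Integrable (fun p : A × A => F p * G p) (μ.prod μ) :=
    integrable_contr μ hFm.aestronglyMeasurable hGm.aestronglyMeasurable hnf hng hFb hGb
      hnf_fin hng_fin
  -- the big 4-variable function
  set H : (A × A) × (C × D) → ℝ :=
    fun q => (f q.1.1 q.2.1 * f q.1.2 q.2.1) * (g q.1.1 q.2.2 * g q.1.2 q.2.2) with hH_def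
  have hHm : Measurable H := by
    apply Measurable.mul
    · exact (hfm.comp ((measurable_fst.comp measurable_fst).prodMk
        (measurable_fst.comp measurable_snd))).mul
        (hfm.comp ((measurable_snd.comp measurable_fst).prodMk
        (measurable_fst.comp measurable_snd)))
    · exact (hgm.comp ((measurable_fst.comp measurable_fst).prodMk
        (measurable_snd.comp measurable_snd))).mul
        (hgm.comp ((measurable_snd.comp measurable_fst).prodMk
        (measurable_snd.comp measurable_snd)))
  have hHint : Integrable H ((μ.prod μ).prod (ν.prod τ)) := by
    refine ⟨hHm.aestronglyMeasurable, ?_⟩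
    rw [HasFiniteIntegral]
    have step : ∀ p : A × A, ∫⁻ yz : C × D, (‖H (p, yz)‖₊ : ℝ≥0∞) ∂(ν.prod τ) ≤
        (nf p.1 ^ (1/2:ℝ) * ng p.1 ^ (1/2:ℝ)) * (nf p.2 ^ (1/2:ℝ) * ng p.2 ^ (1/2:ℝ)) := by
      intro p
      have e : ∀ yz : C × D, (‖H (p, yz)‖₊ : ℝ≥0∞) =
          ((‖f p.1 yz.1‖₊ : ℝ≥0∞) * (‖f p.2 yz.1‖₊ : ℝ≥0∞)) *
            ((‖g p.1 yz.2‖₊ : ℝ≥0∞) * (‖g p.2 yz.2‖₊ : ℝ≥0∞)) := by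
        intro yz
        simp_rw [hH_def, nnnorm_mul, ENNReal.coe_mul]
      calc ∫⁻ yz : C × D, (‖H (p, yz)‖₊ : ℝ≥0∞) ∂(ν.prod τ)
          = ∫⁻ yz : C × D, ((‖f p.1 yz.1‖₊ : ℝ≥0∞) * (‖f p.2 yz.1‖₊ : ℝ≥0∞)) *
              ((‖g p.1 yz.2‖₊ : ℝ≥0∞) * (‖g p.2 yz.2‖₊ : ℝ≥0∞)) ∂(ν.prod τ) := by
            exact lintegral_congr e
        _ = (∫⁻ y, (‖f p.1 y‖₊ : ℝ≥0∞) * (‖f p.2 y‖₊ : ℝ≥0∞) ∂ν) *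
              ∫⁻ z, (‖g p.1 z‖₊ : ℝ≥0∞) * (‖g p.2 z‖₊ : ℝ≥0∞) ∂τ :=
            lintegral_prod_mul
              ((hfm.comp (measurable_prodMk_left)).nnnorm.coe_nnreal_ennreal.mul
                (hfm.comp (measurable_prodMk_left)).nnnorm.coe_nnreal_ennreal).aemeasurable
              ((hgm.comp (measurable_prodMk_left)).nnnorm.coe_nnreal_ennreal.mul
                (hgm.comp (measurable_prodMk_left)).nnnorm.coe_nnreal_ennreal).aemeasurable
        _ ≤ (nf p.1 ^ (1/2:ℝ) * nf p.2 ^ (1/2:ℝ)) * (ng p.1 ^ (1/2:ℝ) * ng p.2 ^ (1/2:ℝ)) :=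
            mul_le_mul' (keyf p.1 p.2) (keyg p.1 p.2)
        _ = _ := by ring
    calc ∫⁻ q, (‖H q‖₊ : ℝ≥0∞) ∂((μ.prod μ).prod (ν.prod τ))
        = ∫⁻ p : A × A, ∫⁻ yz : C × D, (‖H (p, yz)‖₊ : ℝ≥0∞) ∂(ν.prod τ) ∂(μ.prod μ) :=
          lintegral_prod _ hHm.nnnorm.coe_nnreal_ennreal.aemeasurable
      _ ≤ ∫⁻ p : A × A, (nf p.1 ^ (1/2:ℝ) * ng p.1 ^ (1/2:ℝ)) *
            (nf p.2 ^ (1/2:ℝ) * ng p.2 ^ (1/2:ℝ)) ∂(μ.prod μ) := lintegral_mono step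
      _ < ⊤ := lintegral_pair_lt_top μ hnf hng hnf_fin hng_fin
  -- first identity : ∫ H = ∫ F * G
  have e1 : ∫ q, H q ∂((μ.prod μ).prod (ν.prod τ)) = ∫ p : A × A, F p * G p ∂(μ.prod μ) := by
    rw [integral_prod _ hHint]
    refine integral_congr_ae (Filter.Eventually.of_forall fun p => ?_)
    exact integral_prod_mul (fun y => f p.1 y * f p.2 y) (fun z => g p.1 z * g p.2 z)
  -- second identity : ∫ H = ∫ (contraction)²
  have e2 : ∫ q, H q ∂((μ.prod μ).prod (ν.prod τ)) =
      ∫ yz : C × D, (∫ w, f w yz.1 * g w yz.2 ∂μ) ^ 2 ∂(ν.prod τ) := by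
    rw [integral_prod_symm _ hHint]
    refine integral_congr_ae (Filter.Eventually.of_forall fun yz => ?_)
    show ∫ p : A × A, H (p, yz) ∂(μ.prod μ) = (∫ w, f w yz.1 * g w yz.2 ∂μ) ^ 2
    have : ∫ p : A × A, H (p, yz) ∂(μ.prod μ) =
        ∫ p : A × A, (fun w => f w yz.1 * g w yz.2) p.1 *
          (fun w => f w yz.1 * g w yz.2) p.2 ∂(μ.prod μ) :=
      integral_congr_ae (Filter.Eventually.of_forall fun p => by simp only [hH_def]; ring)
    rw [this, integral_prod_mul (fun w => f w yz.1 * g w yz.2) (fun w => f w yz.1 * g w yz.2),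
      sq]
  -- integrability of the contraction squared
  have hQ : Integrable (fun yz : C × D => (∫ w, f w yz.1 * g w yz.2 ∂μ) ^ 2) (ν.prod τ) := by
    refine (hHint.integral_prod_right).congr
      (Filter.Eventually.of_forall fun yz => ?_)
    show ∫ p : A × A, H (p, yz) ∂(μ.prod μ) = (∫ w, f w yz.1 * g w yz.2 ∂μ) ^ 2
    have : ∫ p : A × A, H (p, yz) ∂(μ.prod μ) =
        ∫ p : A × A, (fun w => f w yz.1 * g w yz.2) p.1 *
          (fun w => f w yz.1 * g w yz.2) p.2 ∂(μ.prod μ) :=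
      integral_congr_ae (Filter.Eventually.of_forall fun p => by simp only [hH_def]; ring)
    rw [this, integral_prod_mul (fun w => f w yz.1 * g w yz.2) (fun w => f w yz.1 * g w yz.2),
      sq]
  -- pointwise AM-GM and conclusion
  have hmono : ∫ p : A × A, F p * G p ∂(μ.prod μ) ≤
      ∫ p : A × A, 2⁻¹ * (F p * F p) + 2⁻¹ * (G p * G p) ∂(μ.prod μ) := by
    refine integral_mono hFG ((hF2.const_mul _).add (hG2.const_mul _)) fun p => ?_
    nlinarith [sq_nonneg (F p - G p)]
  have hsplit : ∫ p : A × A, 2⁻¹ * (F p * F p) + 2⁻¹ * (G p * G p) ∂(μ.prod μ) =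
      2⁻¹ * (∫ p : A × A, F p * F p ∂(μ.prod μ)) +
      2⁻¹ * (∫ p : A × A, G p * G p ∂(μ.prod μ)) := by
    rw [integral_add (hF2.const_mul _) (hG2.const_mul _), integral_const_mul,
      integral_const_mul]
  have hF2' : Integrable (fun p : A × A => (∫ y, f p.1 y * f p.2 y ∂ν) ^ 2) (μ.prod μ) := by
    refine hF2.congr (Filter.Eventually.of_forall fun p => ?_)
    simp only [hF_def]; ring
  have hG2' : Integrable (fun p : A × A => (∫ z, g p.1 z * g p.2 z ∂τ) ^ 2) (μ.prod μ) := by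
    refine hG2.congr (Filter.Eventually.of_forall fun p => ?_)
    simp only [hG_def]; ring
  refine ⟨hQ, hF2', hG2', ?_⟩
  have eF : ∫ p : A × A, (∫ y, f p.1 y * f p.2 y ∂ν) ^ 2 ∂(μ.prod μ) =
      ∫ p : A × A, F p * F p ∂(μ.prod μ) :=
    integral_congr_ae (Filter.Eventually.of_forall fun p => by simp only [hF_def]; ring)
  have eG : ∫ p : A × A, (∫ z, g p.1 z * g p.2 z ∂τ) ^ 2 ∂(μ.prod μ) =
      ∫ p : A × A, G p * G p ∂(μ.prod μ) :=
    integral_congr_ae (Filter.Eventually.of_forall fun p => by simp only [hG_def]; ring)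
  rw [eF, eG, ← e2, e1]
  exact hmono.trans (le_of_eq hsplit)


end ContractionAux

instance posMeasure.instSigmaFinite (a : ℕ) : SigmaFinite (posMeasure a) := by
  unfold posMeasure; infer_instance

/-- Contraction inequality in the case `l = k`.
Blocks: `a = k` integrated common variables, `c = n - k` remaining variables of `f`,
`d = m - k` remaining variables of `g`. The contraction
`(f ⋆_k^k g)(y,z) = 2⁻ᵃ ∫ f(w,y) g(w,z) dw`, and the self-contractions
`(f ⋆_{n-k}^{n-k} f)(u,x) = 2⁻ᶜ ∫ f(u,y) f(x,y) dy` (a function of `2k` variables),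
similarly for `g`; the constants are `2^{2n-4k-1} = 2^{2c-2a-1}` and
`2^{2m-4k-1} = 2^{2d-2a-1}`. -/
theorem contraction_bound_eq (a c d : ℕ)
    (f : (Fin a → ℝ) → (Fin c → ℝ) → ℝ)
    (g : (Fin a → ℝ) → (Fin d → ℝ) → ℝ)
    (hf : MemLp (fun q : (Fin a → ℝ) × (Fin c → ℝ) => f q.1 q.2) 2
      ((posMeasure a).prod (posMeasure c)))
    (hg : MemLp (fun q : (Fin a → ℝ) × (Fin d → ℝ) => g q.1 q.2) 2
      ((posMeasure a).prod (posMeasure d))) :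
    (∫ y, ∫ z, ((2:ℝ) ^ (-(a:ℤ)) * ∫ w, f w y * g w z ∂(posMeasure a)) ^ 2
        ∂(posMeasure d) ∂(posMeasure c))
    ≤ (2:ℝ) ^ (2*(c:ℤ) - 2*a - 1) *
        (∫ u, ∫ x, ((2:ℝ) ^ (-(c:ℤ)) * ∫ y, f u y * f x y ∂(posMeasure c)) ^ 2
          ∂(posMeasure a) ∂(posMeasure a))
      + (2:ℝ) ^ (2*(d:ℤ) - 2*a - 1) *
        (∫ u, ∫ x, ((2:ℝ) ^ (-(d:ℤ)) * ∫ z, g u z * g x z ∂(posMeasure d)) ^ 2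
          ∂(posMeasure a) ∂(posMeasure a)) := by
  set μa := posMeasure a
  set νc := posMeasure c
  set τd := posMeasure d
  have hfsm := hf.1
  have hgsm := hg.1
  -- measurable modifications
  set f' : (Fin a → ℝ) → (Fin c → ℝ) → ℝ := fun w y => hfsm.mk _ (w, y) with hf'_def
  set g' : (Fin a → ℝ) → (Fin d → ℝ) → ℝ := fun w z => hgsm.mk _ (w, z) with hg'_def
  have hf'meas : Measurable fun q : (Fin a → ℝ) × (Fin c → ℝ) => f' q.1 q.2 :=
    (hfsm.stronglyMeasurable_mk.measurable).comp (measurable_fst.prodMk measurable_snd)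
  have hg'meas : Measurable fun q : (Fin a → ℝ) × (Fin d → ℝ) => g' q.1 q.2 :=
    (hgsm.stronglyMeasurable_mk.measurable).comp (measurable_fst.prodMk measurable_snd)
  have hff' : (fun q : (Fin a → ℝ) × (Fin c → ℝ) => f q.1 q.2)
      =ᵐ[μa.prod νc] fun q => f' q.1 q.2 := by
    filter_upwards [hfsm.ae_eq_mk] with q hq; exact hq
  have hgg' : (fun q : (Fin a → ℝ) × (Fin d → ℝ) => g q.1 q.2)
      =ᵐ[μa.prod τd] fun q => g' q.1 q.2 := by
    filter_upwards [hgsm.ae_eq_mk] with q hq; exact hq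
  have hf' : MemLp (fun q : (Fin a → ℝ) × (Fin c → ℝ) => f' q.1 q.2) 2 (μa.prod νc) :=
    hf.ae_eq hff'
  have hg' : MemLp (fun q : (Fin a → ℝ) × (Fin d → ℝ) => g' q.1 q.2) 2 (μa.prod τd) :=
    hg.ae_eq hgg'
  have hf2' : ∫⁻ q, (‖f' q.1 q.2‖₊ : ℝ≥0∞) ^ (2:ℝ) ∂(μa.prod νc) ≠ ⊤ := by
    have h := lintegral_rpow_enorm_lt_top_of_eLpNorm_lt_top
      (two_ne_zero) (ENNReal.ofNat_ne_top) hf'.2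
    simpa [enorm_eq_nnnorm] using h.ne
  have hg2' : ∫⁻ q, (‖g' q.1 q.2‖₊ : ℝ≥0∞) ^ (2:ℝ) ∂(μa.prod τd) ≠ ⊤ := by
    have h := lintegral_rpow_enorm_lt_top_of_eLpNorm_lt_top
      (two_ne_zero) (ENNReal.ofNat_ne_top) hg'.2
    simpa [enorm_eq_nnnorm] using h.ne
  -- a.e. slice equalities
  have h1 : ∀ᵐ w ∂μa, ∀ᵐ y ∂νc, f w y = f' w y := Measure.ae_ae_of_ae_prod hff'
  have h1' : ∀ᵐ y ∂νc, ∀ᵐ w ∂μa, f w y = f' w y := by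
    have hsw : ∀ᵐ q ∂(νc.prod μa), f q.2 q.1 = f' q.2 q.1 :=
      ((Measure.measurePreserving_swap (μ := νc) (ν := μa)).quasiMeasurePreserving).ae hff'
    exact Measure.ae_ae_of_ae_prod hsw
  have hg1' : ∀ᵐ z ∂τd, ∀ᵐ w ∂μa, g w z = g' w z := by
    have hsw : ∀ᵐ q ∂(τd.prod μa), g q.2 q.1 = g' q.2 q.1 :=
      ((Measure.measurePreserving_swap (μ := τd) (ν := μa)).quasiMeasurePreserving).ae hgg'
    exact Measure.ae_ae_of_ae_prod hsw
  have hg1 : ∀ᵐ w ∂μa, ∀ᵐ z ∂τd, g w z = g' w z := Measure.ae_ae_of_ae_prod hgg'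
  -- replace f by f', g by g' in the three statement integrals
  have hLcong : (∫ y, ∫ z, ((2:ℝ) ^ (-(a:ℤ)) * ∫ w, f w y * g w z ∂μa) ^ 2 ∂τd ∂νc)
      = ∫ y, ∫ z, ((2:ℝ) ^ (-(a:ℤ)) * ∫ w, f' w y * g' w z ∂μa) ^ 2 ∂τd ∂νc := by
    refine integral_congr_ae ?_
    filter_upwards [h1'] with y hy
    refine integral_congr_ae ?_
    filter_upwards [hg1'] with z hz
    have : ∫ w, f w y * g w z ∂μa = ∫ w, f' w y * g' w z ∂μa := by
      refine integral_congr_ae ?_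
      filter_upwards [hy, hz] with w e1 e2
      rw [e1, e2]
    rw [this]
  have hFcong : (∫ u, ∫ x, ((2:ℝ) ^ (-(c:ℤ)) * ∫ y, f u y * f x y ∂νc) ^ 2 ∂μa ∂μa)
      = ∫ u, ∫ x, ((2:ℝ) ^ (-(c:ℤ)) * ∫ y, f' u y * f' x y ∂νc) ^ 2 ∂μa ∂μa := by
    refine integral_congr_ae ?_
    filter_upwards [h1] with u hu
    refine integral_congr_ae ?_
    filter_upwards [h1] with x hx
    have : ∫ y, f u y * f x y ∂νc = ∫ y, f' u y * f' x y ∂νc := by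
      refine integral_congr_ae ?_
      filter_upwards [hu, hx] with y e1 e2
      rw [e1, e2]
    rw [this]
  have hGcong : (∫ u, ∫ x, ((2:ℝ) ^ (-(d:ℤ)) * ∫ z, g u z * g x z ∂τd) ^ 2 ∂μa ∂μa)
      = ∫ u, ∫ x, ((2:ℝ) ^ (-(d:ℤ)) * ∫ z, g' u z * g' x z ∂τd) ^ 2 ∂μa ∂μa := by
    refine integral_congr_ae ?_
    filter_upwards [hg1] with u hu
    refine integral_congr_ae ?_
    filter_upwards [hg1] with x hx
    have : ∫ z, g u z * g x z ∂τd = ∫ z, g' u z * g' x z ∂τd := by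
      refine integral_congr_ae ?_
      filter_upwards [hu, hx] with z e1 e2
      rw [e1, e2]
    rw [this]
  obtain ⟨hQ, hF2, hG2, hineq⟩ :=
    ContractionAux.main μa νc τd f' g' hf'meas hg'meas hf2' hg2'
  -- notations for the three product integrals
  set IQ := ∫ yz : (Fin c → ℝ) × (Fin d → ℝ),
    (∫ w, f' w yz.1 * g' w yz.2 ∂μa) ^ 2 ∂(νc.prod τd) with hIQ_def
  set IF := ∫ p : (Fin a → ℝ) × (Fin a → ℝ),
    (∫ y, f' p.1 y * f' p.2 y ∂νc) ^ 2 ∂(μa.prod μa) with hIF_def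
  set IG := ∫ p : (Fin a → ℝ) × (Fin a → ℝ),
    (∫ z, g' p.1 z * g' p.2 z ∂τd) ^ 2 ∂(μa.prod μa) with hIG_def
  have hIFpos : 0 ≤ IF := integral_nonneg fun p => sq_nonneg _
  have hIGpos : 0 ≤ IG := integral_nonneg fun p => sq_nonneg _
  -- express the iterated integrals through the product ones
  have hLeq : (∫ y, ∫ z, ((2:ℝ) ^ (-(a:ℤ)) * ∫ w, f' w y * g' w z ∂μa) ^ 2 ∂τd ∂νc)
      = ((2:ℝ) ^ (-(a:ℤ))) ^ 2 * IQ := by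
    have e : ∀ y, (∫ z, ((2:ℝ) ^ (-(a:ℤ)) * ∫ w, f' w y * g' w z ∂μa) ^ 2 ∂τd)
        = ∫ z, ((2:ℝ) ^ (-(a:ℤ))) ^ 2 * (∫ w, f' w y * g' w z ∂μa) ^ 2 ∂τd := by
      intro y
      refine integral_congr_ae (Filter.Eventually.of_forall fun z => ?_)
      ring
    calc (∫ y, ∫ z, ((2:ℝ) ^ (-(a:ℤ)) * ∫ w, f' w y * g' w z ∂μa) ^ 2 ∂τd ∂νc)
        = ∫ y, ∫ z, ((2:ℝ) ^ (-(a:ℤ))) ^ 2 * (∫ w, f' w y * g' w z ∂μa) ^ 2 ∂τd ∂νc :=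
          integral_congr_ae (Filter.Eventually.of_forall fun y => e y)
      _ = ∫ yz : (Fin c → ℝ) × (Fin d → ℝ),
            ((2:ℝ) ^ (-(a:ℤ))) ^ 2 * (∫ w, f' w yz.1 * g' w yz.2 ∂μa) ^ 2 ∂(νc.prod τd) :=
          (integral_prod _ (hQ.const_mul _)).symm
      _ = ((2:ℝ) ^ (-(a:ℤ))) ^ 2 * IQ := by rw [hIQ_def, integral_const_mul]
  have hFeq : (∫ u, ∫ x, ((2:ℝ) ^ (-(c:ℤ)) * ∫ y, f' u y * f' x y ∂νc) ^ 2 ∂μa ∂μa)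
      = ((2:ℝ) ^ (-(c:ℤ))) ^ 2 * IF := by
    calc (∫ u, ∫ x, ((2:ℝ) ^ (-(c:ℤ)) * ∫ y, f' u y * f' x y ∂νc) ^ 2 ∂μa ∂μa)
        = ∫ u, ∫ x, ((2:ℝ) ^ (-(c:ℤ))) ^ 2 * (∫ y, f' u y * f' x y ∂νc) ^ 2 ∂μa ∂μa := by
          refine integral_congr_ae (Filter.Eventually.of_forall fun u => ?_)
          refine integral_congr_ae (Filter.Eventually.of_forall fun x => ?_)
          ring
      _ = ∫ p : (Fin a → ℝ) × (Fin a → ℝ),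
            ((2:ℝ) ^ (-(c:ℤ))) ^ 2 * (∫ y, f' p.1 y * f' p.2 y ∂νc) ^ 2 ∂(μa.prod μa) :=
          (integral_prod _ (hF2.const_mul _)).symm
      _ = ((2:ℝ) ^ (-(c:ℤ))) ^ 2 * IF := by rw [hIF_def, integral_const_mul]
  have hGeq : (∫ u, ∫ x, ((2:ℝ) ^ (-(d:ℤ)) * ∫ z, g' u z * g' x z ∂τd) ^ 2 ∂μa ∂μa)
      = ((2:ℝ) ^ (-(d:ℤ))) ^ 2 * IG := by
    calc (∫ u, ∫ x, ((2:ℝ) ^ (-(d:ℤ)) * ∫ z, g' u z * g' x z ∂τd) ^ 2 ∂μa ∂μa)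
        = ∫ u, ∫ x, ((2:ℝ) ^ (-(d:ℤ))) ^ 2 * (∫ z, g' u z * g' x z ∂τd) ^ 2 ∂μa ∂μa := by
          refine integral_congr_ae (Filter.Eventually.of_forall fun u => ?_)
          refine integral_congr_ae (Filter.Eventually.of_forall fun x => ?_)
          ring
      _ = ∫ p : (Fin a → ℝ) × (Fin a → ℝ),
            ((2:ℝ) ^ (-(d:ℤ))) ^ 2 * (∫ z, g' p.1 z * g' p.2 z ∂τd) ^ 2 ∂(μa.prod μa) :=
          (integral_prod _ (hG2.const_mul _)).symm
      _ = ((2:ℝ) ^ (-(d:ℤ))) ^ 2 * IG := by rw [hIG_def, integral_const_mul]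
  -- constants
  have hpow : ∀ m : ℤ, ((2:ℝ) ^ m) ^ 2 = (2:ℝ) ^ (2 * m) := by
    intro m
    rw [← zpow_natCast ((2:ℝ) ^ m) 2, ← zpow_mul]
    norm_num [mul_comm]
  have hcC : (2:ℝ) ^ (2*(c:ℤ) - 2*a - 1) * ((2:ℝ) ^ (-(c:ℤ))) ^ 2
      = ((2:ℝ) ^ (-(a:ℤ))) ^ 2 * 2⁻¹ := by
    rw [hpow, hpow, ← zpow_add₀ (two_ne_zero : (2:ℝ) ≠ 0),
      show (2⁻¹ : ℝ) = (2:ℝ) ^ (-1 : ℤ) by norm_num,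
      ← zpow_add₀ (two_ne_zero : (2:ℝ) ≠ 0)]
    ring_nf
  have hcD : (2:ℝ) ^ (2*(d:ℤ) - 2*a - 1) * ((2:ℝ) ^ (-(d:ℤ))) ^ 2
      = ((2:ℝ) ^ (-(a:ℤ))) ^ 2 * 2⁻¹ := by
    rw [hpow, hpow, ← zpow_add₀ (two_ne_zero : (2:ℝ) ≠ 0),
      show (2⁻¹ : ℝ) = (2:ℝ) ^ (-1 : ℤ) by norm_num,
      ← zpow_add₀ (two_ne_zero : (2:ℝ) ≠ 0)]
    ring_nf
  -- put everything together
  rw [hLcong, hFcong, hGcong, hLeq, hFeq, hGeq]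
  calc ((2:ℝ) ^ (-(a:ℤ))) ^ 2 * IQ
      ≤ ((2:ℝ) ^ (-(a:ℤ))) ^ 2 * (2⁻¹ * IF + 2⁻¹ * IG) := by
        refine mul_le_mul_of_nonneg_left hineq (by positivity)
    _ = (2:ℝ) ^ (2*(c:ℤ) - 2*a - 1) * (((2:ℝ) ^ (-(c:ℤ))) ^ 2 * IF)
        + (2:ℝ) ^ (2*(d:ℤ) - 2*a - 1) * (((2:ℝ) ^ (-(d:ℤ))) ^ 2 * IG) := by
        rw [show (2:ℝ) ^ (2*(c:ℤ) - 2*a - 1) * (((2:ℝ) ^ (-(c:ℤ))) ^ 2 * IF)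
            = ((2:ℝ) ^ (2*(c:ℤ) - 2*a - 1) * ((2:ℝ) ^ (-(c:ℤ))) ^ 2) * IF from by ring,
          show (2:ℝ) ^ (2*(d:ℤ) - 2*a - 1) * (((2:ℝ) ^ (-(d:ℤ))) ^ 2 * IG)
            = ((2:ℝ) ^ (2*(d:ℤ) - 2*a - 1) * ((2:ℝ) ^ (-(d:ℤ))) ^ 2) * IG from by ring,
          hcC, hcD]
        ring
end

section
/- Let $G$ be a finite simple graph with at least one edge and no isolated vertices, let $v_H$ and $e_H$ denote the number of vertices and edges of a subgraph $H$, and let $\beta = \max\{e_H/v_H : H \subseteq G,\ v_H \ge 1\}$. Let $(p_n)_{n\ge 1}$ be a sequence in $(0,1)$. Then $\big(n p_n^{\beta} \to \infty \text{ and } n^2(1-p_n)\to\infty\big)$ if and only if $(1-p_n)\min_{H\subseteq G,\ e_H\ge 1} n^{v_H} p_n^{e_H} \to \infty$ as $n\to\infty$. -/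
open Filter

private lemma two_le_verts_ncard {V : Type*} [Fintype V] {G : SimpleGraph V}
    (H : G.Subgraph) (he : 1 ≤ H.edgeSet.ncard) : 2 ≤ H.verts.ncard := by
  have hne : H.edgeSet.Nonempty := by
    rw [← Set.ncard_pos (Set.toFinite _)]; omega
  obtain ⟨e, heM⟩ := hne
  induction e using Sym2.ind with
  | _ a b =>
    rw [SimpleGraph.Subgraph.mem_edgeSet] at heM
    have hab : a ≠ b := (H.adj_sub heM).ne
    have hsub : ({a, b} : Set V) ⊆ H.verts := by
      rintro x (rfl | rfl)
      · exact H.edge_vert heM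
      · exact H.edge_vert heM.symm
    calc 2 = ({a, b} : Set V).ncard := (Set.ncard_pair hab).symm
      _ ≤ H.verts.ncard := Set.ncard_le_ncard hsub (Set.toFinite _)

/-- Equivalence of the Ruciński conditions with the divergence of
`(1 - pₙ) · min_{H ⊆ G, e_H ≥ 1} n^{v_H} pₙ^{e_H}`. -/
theorem rucinski_condition_equiv {V : Type*} [Fintype V] (G : SimpleGraph V)
    (hE : G.edgeSet.Nonempty)
    (hiso : ∀ v : V, ∃ w, G.Adj v w)
    (β : ℝ)
    (hβ : IsGreatest {r : ℝ | ∃ H : G.Subgraph, 1 ≤ H.verts.ncard ∧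
        r = (H.edgeSet.ncard : ℝ) / (H.verts.ncard : ℝ)} β)
    (p : ℕ → ℝ) (hp : ∀ n, p n ∈ Set.Ioo (0:ℝ) 1) :
    (Tendsto (fun n : ℕ => (n : ℝ) * (p n) ^ β) atTop atTop ∧
        Tendsto (fun n : ℕ => (n : ℝ) ^ 2 * (1 - p n)) atTop atTop) ↔
      Tendsto (fun n : ℕ => (1 - p n) *
        sInf {x : ℝ | ∃ H : G.Subgraph, 1 ≤ H.edgeSet.ncard ∧
          x = (n : ℝ) ^ H.verts.ncard * (p n) ^ H.edgeSet.ncard}) atTop atTop := by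
  obtain ⟨e0, he0⟩ := hE
  induction e0 using Sym2.ind with
  | _ a b =>
  rw [SimpleGraph.mem_edgeSet] at he0
  have hab : a ≠ b := he0.ne
  set H0 := G.subgraphOfAdj he0 with hH0
  have hv0 : H0.verts.ncard = 2 := by
    rw [hH0]
    simp only [SimpleGraph.subgraphOfAdj_verts]
    exact Set.ncard_pair hab
  have he0' : H0.edgeSet.ncard = 1 := by
    rw [hH0, SimpleGraph.edgeSet_subgraphOfAdj]
    exact Set.ncard_singleton _
  have h12 : (1:ℝ)/2 ≤ β := by
    have : (1:ℝ)/2 ∈ {r : ℝ | ∃ H : G.Subgraph, 1 ≤ H.verts.ncard ∧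
        r = (H.edgeSet.ncard : ℝ) / (H.verts.ncard : ℝ)} := by
      refine ⟨H0, by omega, ?_⟩
      rw [hv0, he0']; norm_num
    exact hβ.2 this
  have hβ0 : (0:ℝ) ≤ β := by linarith
  obtain ⟨H1, hv1, hβeq⟩ := hβ.1
  have he1 : 1 ≤ H1.edgeSet.ncard := by
    by_contra hc
    have : H1.edgeSet.ncard = 0 := by omega
    rw [this] at hβeq
    simp at hβeq
    linarith
  set S : ℕ → Set ℝ := fun n => {x : ℝ | ∃ H : G.Subgraph, 1 ≤ H.edgeSet.ncard ∧
      x = (n : ℝ) ^ H.verts.ncard * (p n) ^ H.edgeSet.ncard} with hS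
  have hSne : ∀ n, (S n).Nonempty := fun n => ⟨_, H1, he1, rfl⟩
  have hSbdd : ∀ n, BddBelow (S n) := by
    intro n
    refine ⟨0, ?_⟩
    rintro x ⟨H, _, rfl⟩
    have h0p := (hp n).1
    positivity
  set E := G.edgeSet.ncard with hEdef
  show (Tendsto (fun n : ℕ => (n : ℝ) * (p n) ^ β) atTop atTop ∧
        Tendsto (fun n : ℕ => (n : ℝ) ^ 2 * (1 - p n)) atTop atTop) ↔
      Tendsto (fun n : ℕ => (1 - p n) * sInf (S n)) atTop atTop
  constructor
  · rintro ⟨h1, h2⟩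
    rw [tendsto_atTop]
    intro M
    set K := max M 1 with hK
    have hK1 : (1:ℝ) ≤ K := le_max_right _ _
    have hMK : M ≤ K := le_max_left _ _
    filter_upwards [h1.eventually_ge_atTop (max 1 (Real.sqrt (2*K))),
      h2.eventually_ge_atTop (2^E * K)] with n hn1 hn2
    have h0p := (hp n).1
    have hp1 := (hp n).2
    have h1p : (0:ℝ) < 1 - p n := by linarith
    have hnb1 : (1:ℝ) ≤ (n:ℝ) * (p n) ^ β := le_trans (le_max_left _ _) hn1
    have hnbs : Real.sqrt (2*K) ≤ (n:ℝ) * (p n) ^ β := le_trans (le_max_right _ _) hn1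
    have hpβ1 : (p n) ^ β ≤ 1 := Real.rpow_le_one h0p.le hp1.le hβ0
    have hn1R : (1:ℝ) ≤ (n:ℝ) := by
      calc (1:ℝ) ≤ (n:ℝ) * (p n) ^ β := hnb1
        _ ≤ (n:ℝ) * 1 := by
            apply mul_le_mul_of_nonneg_left hpβ1 (Nat.cast_nonneg n)
        _ = (n:ℝ) := mul_one _
    have hinf : K / (1 - p n) ≤ sInf (S n) := by
      apply le_csInf (hSne n)
      rintro x ⟨H, heH, rfl⟩
      set v := H.verts.ncard with hvdef
      set e := H.edgeSet.ncard with hedef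
      have hv2 : 2 ≤ v := two_le_verts_ncard H heH
      have hvβ : (e:ℝ)/(v:ℝ) ≤ β := hβ.2 ⟨H, by omega, rfl⟩
      have hvpos : (0:ℝ) < (v:ℝ) := by
        have : 0 < v := by omega
        exact_mod_cast this
      have heβ : (e:ℝ) ≤ β * v := by
        rw [div_le_iff₀ hvpos] at hvβ; linarith
      have key1 : ((p n) ^ β) ^ v ≤ (p n) ^ e := by
        calc ((p n) ^ β) ^ v = (p n) ^ (β * (v:ℝ)) := by
              rw [← Real.rpow_natCast ((p n) ^ β) v, ← Real.rpow_mul h0p.le]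
          _ ≤ (p n) ^ ((e:ℝ)) := Real.rpow_le_rpow_of_exponent_ge h0p hp1.le heβ
          _ = (p n) ^ e := Real.rpow_natCast _ _
      have key2 : ((n:ℝ) * (p n) ^ β) ^ v ≤ (n:ℝ) ^ v * (p n) ^ e := by
        rw [mul_pow]
        exact mul_le_mul_of_nonneg_left key1 (pow_nonneg (Nat.cast_nonneg n) v)
      have key3 : ((n:ℝ) * (p n) ^ β) ^ 2 ≤ ((n:ℝ) * (p n) ^ β) ^ v :=
        pow_le_pow_right₀ hnb1 hv2
      by_cases hc : p n ≤ 1/2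
      · have h2K0 : (0:ℝ) ≤ 2*K := by linarith
        have hsq : 2*K ≤ ((n:ℝ) * (p n) ^ β) ^ 2 := by
          calc 2*K = (Real.sqrt (2*K))^2 := (Real.sq_sqrt h2K0).symm
            _ ≤ ((n:ℝ) * (p n) ^ β) ^ 2 := pow_le_pow_left₀ (Real.sqrt_nonneg _) hnbs 2
        have hdiv : K / (1 - p n) ≤ 2*K := by
          rw [div_le_iff₀ h1p]; nlinarith
        linarith
      · push_neg at hc
        have hE' : e ≤ E := Set.ncard_le_ncard H.edgeSet_subset (Set.toFinite _)
        have hpe : ((1:ℝ)/2)^E ≤ (p n)^e := by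
          calc ((1:ℝ)/2)^E ≤ ((1:ℝ)/2)^e :=
                pow_le_pow_of_le_one (by norm_num) (by norm_num) hE'
            _ ≤ (p n)^e := pow_le_pow_left₀ (by norm_num) hc.le e
        have hnv : (n:ℝ)^2 ≤ (n:ℝ)^v := pow_le_pow_right₀ hn1R hv2
        have hbig : (n:ℝ)^2 * ((1:ℝ)/2)^E ≤ (n:ℝ)^v * (p n)^e :=
          mul_le_mul hnv hpe (by positivity) (by positivity)
        have hhalf : ((1:ℝ)/2)^E * 2^E = 1 := by
          rw [← mul_pow]; norm_num
        rw [div_le_iff₀ h1p]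
        calc K = ((1:ℝ)/2)^E * ((2:ℝ)^E*K) := by rw [← mul_assoc, hhalf, one_mul]
          _ ≤ ((1:ℝ)/2)^E * ((n:ℝ)^2*(1-p n)) :=
              mul_le_mul_of_nonneg_left hn2 (by positivity)
          _ = ((n:ℝ)^2 * ((1:ℝ)/2)^E) * (1 - p n) := by ring
          _ ≤ ((n:ℝ)^v * (p n)^e) * (1-p n) :=
              mul_le_mul_of_nonneg_right hbig h1p.le
    calc M ≤ K := hMK
      _ = (1 - p n) * (K / (1 - p n)) := by field_simp
      _ ≤ (1 - p n) * sInf (S n) := by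
          apply mul_le_mul_of_nonneg_left hinf h1p.le
  · intro h
    constructor
    · rw [tendsto_atTop]
      intro M
      set K := max M 1 with hK
      have hK1 : (1:ℝ) ≤ K := le_max_right _ _
      have hMK : M ≤ K := le_max_left _ _
      filter_upwards [h.eventually_ge_atTop (K ^ H1.verts.ncard)] with n hn
      have h0p := (hp n).1
      have hp1 := (hp n).2
      have h1p : (0:ℝ) < 1 - p n := by linarith
      have hel : (n:ℝ) ^ H1.verts.ncard * (p n) ^ H1.edgeSet.ncard ∈ S n := ⟨H1, he1, rfl⟩
      have hinf_le := csInf_le (hSbdd n) hel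
      have heq : (n:ℝ) ^ H1.verts.ncard * (p n) ^ H1.edgeSet.ncard
          = ((n:ℝ) * (p n) ^ β) ^ H1.verts.ncard := by
        rw [mul_pow]
        congr 1
        have hv1' : (0:ℝ) < (H1.verts.ncard : ℝ) := by
          have : 0 < H1.verts.ncard := hv1
          positivity
        have hexp : (H1.edgeSet.ncard : ℝ) = β * H1.verts.ncard := by
          rw [hβeq]; field_simp
        rw [← Real.rpow_natCast ((p n) ^ β) H1.verts.ncard, ← Real.rpow_mul h0p.le,
          ← hexp, Real.rpow_natCast]
      have hX0 : (0:ℝ) ≤ (n:ℝ) * (p n) ^ β := by positivity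
      have hKpow : K ^ H1.verts.ncard ≤ ((n:ℝ) * (p n) ^ β) ^ H1.verts.ncard := by
        calc K ^ H1.verts.ncard ≤ (1 - p n) * sInf (S n) := hn
          _ ≤ (1 - p n) * (((n:ℝ) * (p n) ^ β) ^ H1.verts.ncard) := by
              apply mul_le_mul_of_nonneg_left (heq ▸ hinf_le) h1p.le
          _ ≤ ((n:ℝ) * (p n) ^ β) ^ H1.verts.ncard := by
              apply mul_le_of_le_one_left (by positivity)
              linarith
      have : K ≤ (n:ℝ) * (p n) ^ β :=
        le_of_pow_le_pow_left₀ (by omega) hX0 hKpow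
      linarith
    · rw [tendsto_atTop]
      intro M
      filter_upwards [h.eventually_ge_atTop M] with n hn
      have h0p := (hp n).1
      have hp1 := (hp n).2
      have h1p : (0:ℝ) < 1 - p n := by linarith
      have hel : (n:ℝ) ^ H0.verts.ncard * (p n) ^ H0.edgeSet.ncard ∈ S n := by
        exact ⟨H0, by omega, rfl⟩
      have hinf_le := csInf_le (hSbdd n) hel
      rw [hv0, he0', pow_one] at hinf_le
      calc M ≤ (1 - p n) * sInf (S n) := hn
        _ ≤ (1 - p n) * ((n:ℝ)^2 * p n) := mul_le_mul_of_nonneg_left hinf_le h1p.le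
        _ ≤ (1 - p n) * ((n:ℝ)^2 * 1) := by
            apply mul_le_mul_of_nonneg_left _ h1p.le
            apply mul_le_mul_of_nonneg_left hp1.le (by positivity)
        _ = (n:ℝ)^2 * (1 - p n) := by ring
end

section
/- Let $G$ be a finite simple graph with at least 3 vertices and at least one edge. Then $G$ satisfies the balance condition $\max_{H\subseteq G,\ v_H\ge 3} \frac{e_H - 1}{v_H - 2} = \frac{e_G-1}{v_G-2}$ if and only if for every $p\in(0,1)$ and every integer $n\ge v_G$ one has $\min_{H\subseteq G,\ e_H\ge 1} n^{v_H} p^{e_H} = \min\{n^2 p,\ n^{v_G} p^{e_G}\}$. -/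
open Real

/-- Compare products of powers via logarithms. -/
private lemma pow_mul_pow_le_pow_mul_pow {n p : ℝ} (hn : 1 < n) (hp : 0 < p)
    {j k j' k' : ℕ}
    (h : (j' : ℝ) * Real.log n + (k' : ℝ) * Real.log p ≤
         (j : ℝ) * Real.log n + (k : ℝ) * Real.log p) :
    n ^ j' * p ^ k' ≤ n ^ j * p ^ k := by
  have hn0 : (0:ℝ) < n := lt_trans one_pos hn
  have h1 : (0:ℝ) < n ^ j' * p ^ k' := by positivity
  have h2 : (0:ℝ) < n ^ j * p ^ k := by positivity
  rw [← Real.log_le_log_iff h1 h2, Real.log_mul (ne_of_gt (by positivity))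
    (ne_of_gt (by positivity)), Real.log_mul (ne_of_gt (by positivity))
    (ne_of_gt (by positivity)), Real.log_pow, Real.log_pow, Real.log_pow, Real.log_pow]
  exact h

private lemma pow_mul_pow_lt_pow_mul_pow {n p : ℝ} (hn : 1 < n) (hp : 0 < p)
    {j k j' k' : ℕ}
    (h : (j' : ℝ) * Real.log n + (k' : ℝ) * Real.log p <
         (j : ℝ) * Real.log n + (k : ℝ) * Real.log p) :
    n ^ j' * p ^ k' < n ^ j * p ^ k := by
  have hn0 : (0:ℝ) < n := lt_trans one_pos hn
  have h1 : (0:ℝ) < n ^ j' * p ^ k' := by positivity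
  have h2 : (0:ℝ) < n ^ j * p ^ k := by positivity
  rw [← Real.log_lt_log_iff h1 h2, Real.log_mul (ne_of_gt (by positivity))
    (ne_of_gt (by positivity)), Real.log_mul (ne_of_gt (by positivity))
    (ne_of_gt (by positivity)), Real.log_pow, Real.log_pow, Real.log_pow, Real.log_pow]
  exact h

/-- If a subgraph has an edge then its vertex set has at least two elements. -/
private lemma two_le_verts {V : Type*} [Fintype V] {G : SimpleGraph V} (H : G.Subgraph)
    (h : 1 ≤ H.edgeSet.ncard) : 2 ≤ H.verts.ncard := by
  have hne : H.edgeSet.Nonempty := by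
    rw [← Set.ncard_pos (Set.toFinite _)] at *; omega
  obtain ⟨e, he⟩ := hne
  induction e using Sym2.ind with
  | _ a b =>
    rw [SimpleGraph.Subgraph.mem_edgeSet] at he
    have : ({a, b} : Set V) ⊆ H.verts := by
      intro x hx
      rcases hx with rfl | hx
      · exact he.fst_mem
      · rw [Set.mem_singleton_iff] at hx; subst hx; exact he.snd_mem
    calc 2 = ({a, b} : Set V).ncard := (Set.ncard_pair he.ne).symm
      _ ≤ H.verts.ncard := Set.ncard_le_ncard this (Set.toFinite _)

/-- A subgraph with exactly two vertices has at most one edge. -/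
private lemma edge_le_one_of_verts_two {V : Type*} [Fintype V] {G : SimpleGraph V}
    (H : G.Subgraph) (h : H.verts.ncard = 2) : H.edgeSet.ncard ≤ 1 := by
  obtain ⟨x, y, hxy, hv⟩ := Set.ncard_eq_two.mp h
  have hsub : H.edgeSet ⊆ {s(x, y)} := by
    intro e he
    induction e using Sym2.ind with
    | _ a b =>
      rw [SimpleGraph.Subgraph.mem_edgeSet] at he
      have ha : a ∈ ({x, y} : Set V) := hv ▸ he.fst_mem
      have hb : b ∈ ({x, y} : Set V) := hv ▸ he.snd_mem
      have hab := he.ne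
      simp only [Set.mem_insert_iff, Set.mem_singleton_iff] at ha hb
      rcases ha with rfl | rfl <;> rcases hb with rfl | rfl <;>
        simp_all [Sym2.eq_swap]
  calc H.edgeSet.ncard ≤ ({s(x,y)} : Set (Sym2 V)).ncard :=
        Set.ncard_le_ncard hsub (Set.toFinite _)
    _ = 1 := Set.ncard_singleton _

/-- A graph with at least 3 vertices and at least one edge satisfies the balance
condition iff the minimum of `n^{v_H} p^{e_H}` over subgraphs with at least one edge
equals `min (n² p) (n^{v_G} p^{e_G})` for all `p ∈ (0,1)` and `n ≥ v_G`. -/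
theorem balance_condition_iff_min {V : Type*} [Fintype V] (G : SimpleGraph V)
    (hV : 3 ≤ Fintype.card V) (hE : G.edgeSet.Nonempty) :
    (∀ H : G.Subgraph, 3 ≤ H.verts.ncard →
        ((H.edgeSet.ncard : ℝ) - 1) / ((H.verts.ncard : ℝ) - 2) ≤
          ((G.edgeSet.ncard : ℝ) - 1) / ((Fintype.card V : ℝ) - 2)) ↔
      (∀ p : ℝ, p ∈ Set.Ioo (0:ℝ) 1 → ∀ n : ℕ, Fintype.card V ≤ n →
        sInf {x : ℝ | ∃ H : G.Subgraph, 1 ≤ H.edgeSet.ncard ∧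
            x = (n : ℝ) ^ H.verts.ncard * p ^ H.edgeSet.ncard}
          = min ((n : ℝ) ^ 2 * p) ((n : ℝ) ^ (Fintype.card V) * p ^ (G.edgeSet.ncard))) := by
  classical
  set v := Fintype.card V with hv
  have hEcard : 1 ≤ G.edgeSet.ncard := (Set.ncard_pos (Set.toFinite _)).mpr hE
  -- get an adjacency
  obtain ⟨e0, he0⟩ := hE
  obtain ⟨a, b, hab⟩ : ∃ a b, G.Adj a b := by
    induction e0 using Sym2.ind with
    | _ a b => exact ⟨a, b, (SimpleGraph.mem_edgeSet G).mp he0⟩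
  -- the single-edge subgraph
  have hKverts : (G.subgraphOfAdj hab).verts.ncard = 2 := by
    simp [Set.ncard_pair hab.ne]
  have hKedges : (G.subgraphOfAdj hab).edgeSet.ncard = 1 := by
    simp
  -- the top subgraph
  have hTverts : (⊤ : G.Subgraph).verts.ncard = v := by
    rw [SimpleGraph.Subgraph.verts_top, Set.ncard_univ, Nat.card_eq_fintype_card]
  have hTedges : (⊤ : G.Subgraph).edgeSet.ncard = G.edgeSet.ncard := by
    rw [SimpleGraph.Subgraph.edgeSet_top]
  have hvertsle : ∀ H : G.Subgraph, H.verts.ncard ≤ v := by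
    intro H
    rw [hv, ← Nat.card_eq_fintype_card, ← Set.ncard_univ]
    exact Set.ncard_le_ncard (Set.subset_univ _) (Set.toFinite _)
  constructor
  · -- forward
    intro hbal p hp n hn
    obtain ⟨hp0, hp1⟩ := hp
    have hn3 : 3 ≤ n := le_trans hV (by rwa [hv] at hn)
    have hn1 : (1:ℝ) < (n:ℝ) := by exact_mod_cast lt_of_lt_of_le (by norm_num) hn3
    have hL : 0 < Real.log n := Real.log_pos hn1
    have hM : Real.log p < 0 := Real.log_neg hp0 hp1
    set S : Set ℝ := {x : ℝ | ∃ H : G.Subgraph, 1 ≤ H.edgeSet.ncard ∧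
        x = (n : ℝ) ^ H.verts.ncard * p ^ H.edgeSet.ncard} with hS
    have hbdd : BddBelow S := by
      refine ⟨0, ?_⟩
      rintro x ⟨H, hH, rfl⟩
      have : (0:ℝ) < n := lt_trans one_pos hn1
      positivity
    have hKmem : (n : ℝ) ^ 2 * p ∈ S := by
      refine ⟨G.subgraphOfAdj hab, by rw [hKedges], ?_⟩
      rw [hKverts, hKedges, pow_one]
    have hTmem : (n : ℝ) ^ v * p ^ (G.edgeSet.ncard) ∈ S := by
      refine ⟨⊤, by rw [hTedges]; exact hEcard, ?_⟩
      rw [hTverts, hTedges]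
    refine le_antisymm (le_min (csInf_le hbdd hKmem) (csInf_le hbdd hTmem)) ?_
    refine le_csInf ⟨_, hKmem⟩ ?_
    rintro x ⟨H, hH, rfl⟩
    -- show min ≤ n^{vH} p^{eH}
    set vH := H.verts.ncard with hvH
    set eH := H.edgeSet.ncard with heH
    have h2 : 2 ≤ vH := two_le_verts H hH
    have hle : vH ≤ v := hvertsle H
    rcases eq_or_lt_of_le h2 with h2e | h3
    · -- vH = 2, so eH = 1
      have he1 : eH = 1 := le_antisymm (edge_le_one_of_verts_two H h2e.symm) hH
      rw [← h2e, he1, pow_one]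
      exact min_le_left _ _
    · -- vH ≥ 3
      have h3' : 3 ≤ vH := h3
      have hcross : ((eH:ℝ) - 1) * ((v:ℝ) - 2) ≤ ((G.edgeSet.ncard : ℝ) - 1) * ((vH:ℝ) - 2) := by
        have := hbal H (by rw [← hvH]; exact h3')
        rw [← hvH, ← heH] at this
        have d1 : (0:ℝ) < (vH:ℝ) - 2 := by
          have : (3:ℝ) ≤ (vH:ℝ) := by exact_mod_cast h3'
          linarith
        have d2 : (0:ℝ) < (v:ℝ) - 2 := by
          have : (3:ℝ) ≤ (v:ℝ) := by exact_mod_cast hV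
          linarith
        exact (div_le_div_iff₀ d1 d2).mp this
      by_cases hcase : (2:ℝ) * Real.log n + 1 * Real.log p ≤
          (vH:ℝ) * Real.log n + (eH:ℝ) * Real.log p
      · refine le_trans (min_le_left _ _) ?_
        have := pow_mul_pow_le_pow_mul_pow hn1 hp0 (j := vH) (k := eH) (j' := 2) (k' := 1) (by
          push_cast; linarith)
        simpa [pow_one] using this
      · push_neg at hcase
        refine le_trans (min_le_right _ _) ?_
        refine pow_mul_pow_le_pow_mul_pow hn1 hp0 ?_
        set e := G.edgeSet.ncard with he
        have hvle : (vH:ℝ) ≤ (v:ℝ) := by exact_mod_cast hle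
        have h3r : (3:ℝ) ≤ (vH:ℝ) := by exact_mod_cast h3'
        have h3v : (3:ℝ) ≤ (v:ℝ) := by exact_mod_cast hV
        set L := Real.log n
        set M := Real.log p
        -- from hcase: (vH - 2) L + (eH - 1) M < 0
        -- want: v L + e M ≤ vH L + eH M
        nlinarith [mul_le_mul_of_nonpos_right hcross (le_of_lt hM),
          mul_lt_mul_of_pos_left hcase (show (0:ℝ) < (v:ℝ) - 2 by linarith),
          mul_lt_mul_of_pos_left hcase (show (0:ℝ) < (vH:ℝ) - 2 by linarith)]
  · -- backward
    intro hmin H h3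
    set vH := H.verts.ncard with hvH
    set eH := H.edgeSet.ncard with heH
    set e := G.edgeSet.ncard with he
    have d1 : (0:ℝ) < (vH:ℝ) - 2 := by
      have : (3:ℝ) ≤ (vH:ℝ) := by exact_mod_cast h3
      linarith
    have d2 : (0:ℝ) < (v:ℝ) - 2 := by
      have : (3:ℝ) ≤ (v:ℝ) := by exact_mod_cast hV
      linarith
    have hE1 : (1:ℝ) ≤ (e:ℝ) := by exact_mod_cast hEcard
    by_cases heH1 : eH ≤ 1
    · -- trivial case: numerator nonpositive
      have l1 : ((eH:ℝ) - 1) ≤ 0 := by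
        have : (eH:ℝ) ≤ 1 := by exact_mod_cast heH1
        linarith
      have t1 : ((eH:ℝ) - 1) / ((vH:ℝ) - 2) ≤ 0 :=
        div_nonpos_of_nonpos_of_nonneg l1 (le_of_lt d1)
      have t2 : (0:ℝ) ≤ ((e:ℝ) - 1) / ((v:ℝ) - 2) :=
        div_nonneg (by linarith) (le_of_lt d2)
      linarith
    · push_neg at heH1
      by_contra hcon
      push_neg at hcon
      have hcross : ((e:ℝ) - 1) * ((vH:ℝ) - 2) < ((eH:ℝ) - 1) * ((v:ℝ) - 2) :=
        (div_lt_div_iff₀ d2 d1).mp hcon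
      set aR : ℝ := (vH:ℝ) - 2 with haR
      set bR : ℝ := (eH:ℝ) - 1 with hbR
      set AR : ℝ := (v:ℝ) - 2 with hAR
      set BR : ℝ := (e:ℝ) - 1 with hBR
      have hbR1 : (1:ℝ) ≤ bR := by
        have : (2:ℝ) ≤ (eH:ℝ) := by exact_mod_cast heH1
        rw [hbR]; linarith
      have hBR0 : (0:ℝ) ≤ BR := by rw [hBR]; linarith
      have haA : aR ≤ AR := by
        have : (vH:ℝ) ≤ (v:ℝ) := by exact_mod_cast hvertsle H
        rw [haR, hAR]; linarith
      have hD : (0:ℝ) < bR * (BR + 1) := by positivity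
      set γ : ℝ := (aR + AR * bR) / (bR * (BR + 1)) with hγ
      have hγpos : 0 < γ := by
        apply div_pos _ hD
        nlinarith
      have key1 : aR < bR * γ := by
        rw [hγ, mul_div_assoc', lt_div_iff₀ hD]
        nlinarith
      have key2 : aR - AR < (bR - BR) * γ := by
        rw [hγ, mul_div_assoc', lt_div_iff₀ hD]
        nlinarith
      -- now choose n = card V and p = exp (-(γ * log n))
      have hn1 : (1:ℝ) < (v:ℝ) := by
        have : (3:ℝ) ≤ (v:ℝ) := by exact_mod_cast hV
        linarith
      set L : ℝ := Real.log v with hLdef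
      have hL : 0 < L := Real.log_pos hn1
      set p : ℝ := Real.exp (-(γ * L)) with hpdef
      have hp0 : 0 < p := Real.exp_pos _
      have hp1 : p < 1 := by
        rw [hpdef]
        exact Real.exp_lt_one_iff.mpr (neg_lt_zero.mpr (mul_pos hγpos hL))
      have hlogp : Real.log p = -(γ * L) := by rw [hpdef, Real.log_exp]
      clear_value p
      clear hpdef
      clear_value γ
      clear hγ
      rw [haR, hbR] at key1
      rw [haR, hAR, hbR, hBR] at key2
      have hmin' := hmin p ⟨hp0, hp1⟩ v (by rw [hv])
      set S : Set ℝ := {x : ℝ | ∃ H : G.Subgraph, 1 ≤ H.edgeSet.ncard ∧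
          x = (v : ℝ) ^ H.verts.ncard * p ^ H.edgeSet.ncard} with hS
      have hbdd : BddBelow S := by
        refine ⟨0, ?_⟩
        rintro x ⟨H', hH', rfl⟩
        have hv0 : (0:ℝ) < (v:ℝ) := by linarith
        positivity
      have hmem : (v : ℝ) ^ vH * p ^ eH ∈ S := ⟨H, heH1.le, rfl⟩
      have hle : min ((v : ℝ) ^ 2 * p) ((v : ℝ) ^ v * p ^ e) ≤ (v : ℝ) ^ vH * p ^ eH := by
        rw [← hmin']
        exact csInf_le hbdd hmem
      have hlt1 : (v : ℝ) ^ vH * p ^ eH < (v : ℝ) ^ 2 * p := by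
        have := pow_mul_pow_lt_pow_mul_pow (n := (v:ℝ)) hn1 hp0
          (j := 2) (k := 1) (j' := vH) (k' := eH) (by
            rw [hlogp, ← hLdef]
            push_cast
            linarith [mul_lt_mul_of_pos_right key1 hL])
        simpa [pow_one] using this
      have hlt2 : (v : ℝ) ^ vH * p ^ eH < (v : ℝ) ^ v * p ^ e := by
        refine pow_mul_pow_lt_pow_mul_pow (n := (v:ℝ)) hn1 hp0 ?_
        rw [hlogp, ← hLdef]
        linarith [mul_lt_mul_of_pos_right key2 hL]
      exact absurd hle (not_le.mpr (lt_min hlt1 hlt2))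
end

section
/- Let $G$ be a finite simple graph without isolated vertices, $e_G\ge 1$. For each pair of integers $0\le l < k \le e_G$ and for $n$ large, $\max_{K\subseteq H\subseteq G,\ e_K = k-l,\ e_H = k}\ n^{4v_G - 2v_H - v_K}\, p^{4e_G - 2e_H - e_K}(1-p)^{2e_H - e_K - 2} \le \frac{1}{1-p}\,\max_{H\subseteq G,\ e_H\ge 1} n^{4v_G - 3v_H} p^{4e_G - 3e_H}$ for all $p\in(0,1)$ and $n \ge v_G$, up to a constant factor depending only on $G$. -/
private lemma zpow_cube_aux (x : ℝ) (hx : x ≠ 0) (u v w : ℤ) (h : 3 * u = 2 * v + w) :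
    (x ^ u) ^ 3 = (x ^ v) ^ 2 * x ^ w := by
  rw [← zpow_natCast (x ^ u), ← zpow_natCast (x ^ v), ← zpow_mul, ← zpow_mul,
    ← zpow_add₀ hx]
  congr 1
  push_cast
  linarith

/-- Domination, up to a constant depending only on `G`, of the maxima
`max_{K ⊆ H ⊆ G, e_K = k-l, e_H = k} n^{4v_G-2v_H-v_K} p^{4e_G-2e_H-e_K} (1-p)^{2e_H-e_K-2}`
by `(1-p)⁻¹ max_{H ⊆ G, e_H ≥ 1} n^{4v_G-3v_H} p^{4e_G-3e_H}`. -/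
theorem max_domination {V : Type*} [Fintype V] (G : SimpleGraph V)
    (hiso : ∀ v : V, ∃ w, G.Adj v w) (hE : 1 ≤ G.edgeSet.ncard) :
    ∃ C : ℝ, 0 < C ∧ ∀ k l : ℕ, l < k → k ≤ G.edgeSet.ncard →
      ∀ p : ℝ, p ∈ Set.Ioo (0:ℝ) 1 → ∀ n : ℕ, Fintype.card V ≤ n →
        ∀ K H : G.Subgraph, K ≤ H →
          K.edgeSet.ncard = k - l → H.edgeSet.ncard = k →
          (n : ℝ) ^ (4 * (Fintype.card V : ℤ) - 2 * H.verts.ncard - K.verts.ncard) *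
              p ^ (4 * (G.edgeSet.ncard : ℤ) - 2 * H.edgeSet.ncard - K.edgeSet.ncard) *
              (1 - p) ^ (2 * (H.edgeSet.ncard : ℤ) - K.edgeSet.ncard - 2)
            ≤ C / (1 - p) *
              sSup {x : ℝ | ∃ H' : G.Subgraph, 1 ≤ H'.edgeSet.ncard ∧
                x = (n : ℝ) ^ (4 * (Fintype.card V : ℤ) - 3 * H'.verts.ncard) *
                  p ^ (4 * (G.edgeSet.ncard : ℤ) - 3 * H'.edgeSet.ncard)} := by
  classical
  refine ⟨1, one_pos, ?_⟩
  intro k l hlk hk p hp n hn K H hKH hKe hHe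
  obtain ⟨hp0, hp1⟩ := hp
  have h1p : (0:ℝ) < 1 - p := by linarith
  -- V is nonempty, so n > 0
  have hGne : G.edgeSet.Nonempty := by
    apply Set.nonempty_of_ncard_ne_zero; omega
  obtain ⟨e, he⟩ := hGne
  have hVne : Nonempty V := ⟨e.out.1⟩
  have hVpos : 0 < Fintype.card V := Fintype.card_pos
  have hnpos : (0:ℝ) < n := by
    have : 0 < n := lt_of_lt_of_le hVpos hn
    exact_mod_cast this
  have hn0 : (n:ℝ) ≠ 0 := ne_of_gt hnpos
  have hp0' : p ≠ 0 := ne_of_gt hp0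
  -- abbreviations
  set S : Set ℝ := {x : ℝ | ∃ H' : G.Subgraph, 1 ≤ H'.edgeSet.ncard ∧
                x = (n : ℝ) ^ (4 * (Fintype.card V : ℤ) - 3 * H'.verts.ncard) *
                  p ^ (4 * (G.edgeSet.ncard : ℤ) - 3 * H'.edgeSet.ncard)} with hS
  set A : ℝ := (n : ℝ) ^ (4 * (Fintype.card V : ℤ) - 3 * H.verts.ncard) *
      p ^ (4 * (G.edgeSet.ncard : ℤ) - 3 * H.edgeSet.ncard) with hA
  set B : ℝ := (n : ℝ) ^ (4 * (Fintype.card V : ℤ) - 3 * K.verts.ncard) *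
      p ^ (4 * (G.edgeSet.ncard : ℤ) - 3 * K.edgeSet.ncard) with hB
  set X : ℝ := (n : ℝ) ^ (4 * (Fintype.card V : ℤ) - 2 * H.verts.ncard - K.verts.ncard) *
      p ^ (4 * (G.edgeSet.ncard : ℤ) - 2 * H.edgeSet.ncard - K.edgeSet.ncard) with hX
  have hApos : 0 < A := by positivity
  have hBpos : 0 < B := by positivity
  have hXpos : 0 < X := by positivity
  -- the set S is finite, hence bounded above
  have hfin : Finite G.Subgraph := by
    have : Function.Injective (fun H' : G.Subgraph => (H'.verts, H'.Adj)) := by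
      intro a b hab
      simp only [Prod.mk.injEq] at hab
      exact SimpleGraph.Subgraph.ext hab.1 hab.2
    exact Finite.of_injective _ this
  have hSfin : S.Finite := by
    apply Set.Finite.subset (Set.finite_range (fun H' : G.Subgraph =>
      (n : ℝ) ^ (4 * (Fintype.card V : ℤ) - 3 * H'.verts.ncard) *
        p ^ (4 * (G.edgeSet.ncard : ℤ) - 3 * H'.edgeSet.ncard)))
    rintro x ⟨H', _, rfl⟩
    exact ⟨H', rfl⟩
  have hbdd : BddAbove S := hSfin.bddAbove
  have hKedge : 1 ≤ K.edgeSet.ncard := by omega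
  have hHedge : 1 ≤ H.edgeSet.ncard := by omega
  have hAmem : A ∈ S := ⟨H, hHedge, rfl⟩
  have hBmem : B ∈ S := ⟨K, hKedge, rfl⟩
  -- X ≤ max A B via cubing
  have hX3 : X ^ 3 = A ^ 2 * B := by
    rw [hX, hA, hB, mul_pow, mul_pow,
      zpow_cube_aux (n:ℝ) hn0
        (4 * (Fintype.card V : ℤ) - 2 * H.verts.ncard - K.verts.ncard)
        (4 * (Fintype.card V : ℤ) - 3 * H.verts.ncard)
        (4 * (Fintype.card V : ℤ) - 3 * K.verts.ncard) (by ring),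
      zpow_cube_aux p hp0'
        (4 * (G.edgeSet.ncard : ℤ) - 2 * H.edgeSet.ncard - K.edgeSet.ncard)
        (4 * (G.edgeSet.ncard : ℤ) - 3 * H.edgeSet.ncard)
        (4 * (G.edgeSet.ncard : ℤ) - 3 * K.edgeSet.ncard) (by ring)]
    ring
  have hM : X ≤ max A B := by
    have hMnn : (0:ℝ) ≤ max A B := le_trans hApos.le (le_max_left _ _)
    refine le_of_pow_le_pow_left₀ (n := 3) (by norm_num) hMnn ?_
    calc X ^ 3 = A ^ 2 * B := hX3
      _ ≤ (max A B) ^ 2 * max A B := by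
          apply mul_le_mul (pow_le_pow_left₀ hApos.le (le_max_left _ _) 2)
            (le_max_right _ _) hBpos.le (by positivity)
      _ = (max A B) ^ 3 := by ring
  have hXS : X ≤ sSup S := hM.trans (max_le (le_csSup hbdd hAmem) (le_csSup hbdd hBmem))
  -- bound the (1-p) factor
  have heKH : K.edgeSet.ncard ≤ H.edgeSet.ncard := by omega
  have hcexp : (-1 : ℤ) ≤ 2 * (H.edgeSet.ncard : ℤ) - K.edgeSet.ncard - 2 := by
    have h1 : (1:ℤ) ≤ (H.edgeSet.ncard : ℤ) := by exact_mod_cast hHedge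
    have h2 : (K.edgeSet.ncard : ℤ) ≤ (H.edgeSet.ncard : ℤ) := by exact_mod_cast heKH
    linarith
  have hpow : (1 - p) ^ (2 * (H.edgeSet.ncard : ℤ) - K.edgeSet.ncard - 2) ≤ (1 - p)⁻¹ := by
    have := zpow_le_zpow_right_of_le_one₀ h1p (by linarith : 1 - p ≤ 1) hcexp
    simpa using this
  calc X * (1 - p) ^ (2 * (H.edgeSet.ncard : ℤ) - K.edgeSet.ncard - 2)
      ≤ X * (1 - p)⁻¹ := by
        exact mul_le_mul_of_nonneg_left hpow hXpos.le
    _ = (1 - p)⁻¹ * X := by ring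
    _ ≤ (1 - p)⁻¹ * sSup S := by
        exact mul_le_mul_of_nonneg_left hXS (by positivity)
    _ = 1 / (1 - p) * sSup S := by rw [one_div]
end
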